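/- Let α > −1 and β > −1 be real numbers and n ≥ 1 an integer. Then for all real x, (1−x²) (d²/dx²) S_n^{(α,β)}(x) + [β−α−(α+β+2)x] (d/dx) S_n^{(α,β)}(x) + n(n+α+β+1) S_n^{(α,β)}(x) = [2/((α+1)(β+1))] [(α+β+2)_n / n!] [(α+β+2)_{n−1} / (n−1)!] [(β+1)(x−1) − (α+1)(x+1)] (d²/dx²) P_n^{(α,β)}(x). -/
import Mathlib

open Polynomial Finset

/-- The Pochhammer symbol (rising factorial) `(a)_k = a (a+1) ⋯ (a+k-1)`. -/
noncomputable def poch (a : ℝ) (k : ℕ) : ℝ := (ascPochhammer ℝ k).eval a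

/-- The Jacobi polynomial
`P_n^{(α,β)}(x) = Σ_{k=0}^{n} [(n+α+β+1)_k / k!] [(α+k+1)_{n−k} / (n−k)!] ((x−1)/2)^k`,
valid for all real `α`, `β`. -/
noncomputable def jacobiP (α β : ℝ) (n : ℕ) (x : ℝ) : ℝ :=
  ∑ k ∈ Finset.range (n + 1),
    poch ((n : ℝ) + α + β + 1) k / Nat.factorial k *
      (poch (α + k + 1) (n - k) / Nat.factorial (n - k)) * ((x - 1) / 2) ^ k

/-- `S_n^{(α,β)}(x) = [1/((α+1)(β+1))] [(α+β+2)_n (α+β+2)_{n−1} / (n! (n−1)!)]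
`[n(n+α+β+1) P_n^{(α,β)}(x) − {(β+1)(x−1)+(α+1)(x+1)} P_n^{(α,β)}'(x)]`. -/
noncomputable def Sfun (α β : ℝ) (n : ℕ) (x : ℝ) : ℝ :=
  1 / ((α + 1) * (β + 1)) *
    (poch (α + β + 2) n * poch (α + β + 2) (n - 1) /
      (Nat.factorial n * Nat.factorial (n - 1))) *
    ((n : ℝ) * ((n : ℝ) + α + β + 1) * jacobiP α β n x -
      ((β + 1) * (x - 1) + (α + 1) * (x + 1)) * deriv (jacobiP α β n) x)

lemma poch_succ_right' (a : ℝ) (k : ℕ) : poch a (k+1) = poch a k * (a + k) := by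
  simp [poch, ascPochhammer_succ_right]

lemma poch_succ_left' (a : ℝ) (k : ℕ) : poch a (k+1) = a * poch (a+1) k := by
  simp [poch, ascPochhammer_succ_left, Polynomial.eval_comp]

noncomputable def coefA (α β : ℝ) (n k : ℕ) : ℝ :=
  poch ((n : ℝ) + α + β + 1) k / Nat.factorial k *
    (poch (α + k + 1) (n - k) / Nat.factorial (n - k))

lemma coefA_rec (α β : ℝ) (n j : ℕ) (hj : j < n) :
    coefA α β n (j+1) * ((j+1 : ℝ) * (α + j + 1)) =
      ((n : ℝ) - j) * ((n : ℝ) + j + α + β + 1) * coefA α β n j := by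
  obtain ⟨m, hm⟩ : ∃ m, n - j = m + 1 := ⟨n - j - 1, by omega⟩
  have h1 : n - (j+1) = m := by omega
  have h2 : ((n : ℝ) - j) = (m + 1 : ℝ) := by
    have : (n : ℝ) = (j : ℝ) + (m+1 : ℕ) := by
      exact_mod_cast congrArg Nat.cast (by omega : n = j + (m+1))
    rw [this]; push_cast; ring
  unfold coefA
  rw [h1, hm, poch_succ_right', poch_succ_left']
  rw [show (α + ↑(j+1) + 1) = α + (j:ℝ) + 1 + 1 by push_cast; ring]
  rw [Nat.factorial_succ, Nat.factorial_succ]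
  have hfj : (Nat.factorial j : ℝ) ≠ 0 := by exact_mod_cast Nat.factorial_ne_zero j
  have hfm : (Nat.factorial m : ℝ) ≠ 0 := by exact_mod_cast Nat.factorial_ne_zero m
  rw [h2]
  push_cast
  field_simp
  ring

noncomputable def Tp : Polynomial ℝ := C 2⁻¹ * (X - 1)

noncomputable def Jpoly (α β : ℝ) (n : ℕ) : Polynomial ℝ :=
  ∑ k ∈ range (n+1), C (coefA α β n k) * Tp ^ k

lemma ringid (p q : Polynomial ℝ) (h : ∀ y : ℝ, p.eval y = q.eval y) : p = q :=
  Polynomial.funext h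

lemma Ek (α β : ℝ) (n k : ℕ) :
    (1 - X^2) * derivative (derivative (Tp ^ k)) +
      (C (β-α) - C (α+β+2) * X) * derivative (Tp ^ k) +
      C ((n:ℝ)*((n:ℝ)+α+β+1)) * Tp ^ k
    = C ((((n:ℝ)-k)*((n:ℝ)+k+α+β+1))) * Tp ^ k - C ((k:ℝ)*((k:ℝ)+α)) * Tp ^ (k-1) := by
  have hdT : derivative Tp = C 2⁻¹ := by
    simp [Tp]
  match k with
  | 0 =>
      apply ringid; intro y
      simp
  | 1 =>
      rw [pow_one, hdT, derivative_C]
      apply ringid; intro y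
      simp [Tp]
      ring
  | (l+2) =>
      have h1 : derivative (Tp ^ (l+2)) = C (((l:ℝ)+2) * 2⁻¹) * Tp^(l+1) := by
        rw [derivative_pow, hdT]
        apply ringid; intro y
        simp
        ring
      have h2 : derivative (C (((l:ℝ)+2) * 2⁻¹) * Tp^(l+1)) =
          C (((l:ℝ)+2) * ((l:ℝ)+1) * 4⁻¹) * Tp^l := by
        rw [derivative_mul, derivative_C, derivative_pow, hdT]
        apply ringid; intro y
        simp
        ring
      rw [h1, h2]
      apply ringid; intro y
      simp [Tp]
      ring

lemma jacobi_ODE (α β : ℝ) (n : ℕ) :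
    (1 - X^2) * derivative (derivative (Jpoly α β n)) +
      (C (β-α) - C (α+β+2) * X) * derivative (Jpoly α β n) +
      C ((n:ℝ)*((n:ℝ)+α+β+1)) * Jpoly α β n = 0 := by
  have expand : (1 - X^2) * derivative (derivative (Jpoly α β n)) +
      (C (β-α) - C (α+β+2) * X) * derivative (Jpoly α β n) +
      C ((n:ℝ)*((n:ℝ)+α+β+1)) * Jpoly α β n
      = ∑ k ∈ range (n+1), C (coefA α β n k) *
          ((1 - X^2) * derivative (derivative (Tp ^ k)) +
            (C (β-α) - C (α+β+2) * X) * derivative (Tp ^ k) +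
            C ((n:ℝ)*((n:ℝ)+α+β+1)) * Tp ^ k) := by
    simp only [Jpoly, derivative_sum, derivative_C_mul, mul_sum, ← Finset.sum_add_distrib]
    exact Finset.sum_congr rfl (fun k _ => by ring)
  rw [expand]
  have expand2 : ∀ k ∈ range (n+1), C (coefA α β n k) *
          ((1 - X^2) * derivative (derivative (Tp ^ k)) +
            (C (β-α) - C (α+β+2) * X) * derivative (Tp ^ k) +
            C ((n:ℝ)*((n:ℝ)+α+β+1)) * Tp ^ k)
      = C (coefA α β n k * (((n:ℝ)-k)*((n:ℝ)+k+α+β+1))) * Tp ^ k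
        - C (coefA α β n k * ((k:ℝ)*((k:ℝ)+α))) * Tp ^ (k-1) := by
    intro k _
    rw [Ek α β n k]
    rw [mul_sub, ← mul_assoc, ← mul_assoc, ← C_mul, ← C_mul]
  rw [Finset.sum_congr rfl expand2, Finset.sum_sub_distrib]
  rw [Finset.sum_range_succ, Finset.sum_range_succ']
  have hlast : coefA α β n n * (((n:ℝ)-n)*((n:ℝ)+n+α+β+1)) = 0 := by ring
  simp only [hlast, Nat.cast_zero, zero_mul, mul_zero, map_zero, zero_mul, add_zero]
  rw [sub_eq_zero]
  apply Finset.sum_congr rfl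
  intro j hj
  have hjn : j < n := Finset.mem_range.mp hj
  have : coefA α β n (j+1) * (((j+1:ℕ):ℝ)*(((j+1:ℕ):ℝ)+α)) =
      coefA α β n j * (((n:ℝ)-j)*((n:ℝ)+j+α+β+1)) := by
    push_cast
    rw [show ((j:ℝ)+1)*((j:ℝ)+1+α) = ((j:ℝ)+1)*(α+(j:ℝ)+1) by ring]
    rw [coefA_rec α β n j hjn]
    ring
  rw [this]
  simp [Nat.add_sub_cancel]

lemma jacobiP_eq_eval (α β : ℝ) (n : ℕ) :
    jacobiP α β n = fun y => (Jpoly α β n).eval y := by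
  funext y
  simp only [jacobiP, Jpoly, coefA, eval_finset_sum, eval_mul, eval_pow, eval_C,
    eval_sub, eval_one, eval_X, Tp]
  apply Finset.sum_congr rfl
  intro k _
  ring

noncomputable def Spoly (α β : ℝ) (n : ℕ) : Polynomial ℝ :=
  C (1 / ((α + 1) * (β + 1)) *
      (poch (α + β + 2) n * poch (α + β + 2) (n - 1) /
        (Nat.factorial n * Nat.factorial (n - 1)))) *
    (C ((n : ℝ) * ((n : ℝ) + α + β + 1)) * Jpoly α β n -
      (C (β+1) * (X - 1) + C (α+1) * (X + 1)) * derivative (Jpoly α β n))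

lemma Sfun_eq_eval (α β : ℝ) (n : ℕ) :
    Sfun α β n = fun y => (Spoly α β n).eval y := by
  funext y
  have hd : deriv (jacobiP α β n) y = (derivative (Jpoly α β n)).eval y := by
    rw [jacobiP_eq_eval]
    exact Polynomial.deriv _
  have hj : jacobiP α β n y = (Jpoly α β n).eval y := by rw [jacobiP_eq_eval]
  simp only [Sfun, hd, hj, Spoly, eval_mul, eval_C, eval_sub, eval_add,
    eval_one, eval_X]

/-- the Jacobi differential operator applied to `S_n^{(α,β)}` gives
`[2/((α+1)(β+1))] [(α+β+2)_n / n!] [(α+β+2)_{n−1} / (n−1)!]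
`[(β+1)(x−1) − (α+1)(x+1)] P_n^{(α,β)}''(x)`. -/
theorem jacobi_operator_Sfun (α β : ℝ) (hα : -1 < α) (hβ : -1 < β)
    (n : ℕ) (hn : 1 ≤ n) (x : ℝ) :
    (1 - x ^ 2) * iteratedDeriv 2 (Sfun α β n) x +
      (β - α - (α + β + 2) * x) * deriv (Sfun α β n) x +
      (n : ℝ) * ((n : ℝ) + α + β + 1) * Sfun α β n x
    = 2 / ((α + 1) * (β + 1)) * (poch (α + β + 2) n / Nat.factorial n) *
        (poch (α + β + 2) (n - 1) / Nat.factorial (n - 1)) *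
        ((β + 1) * (x - 1) - (α + 1) * (x + 1)) * iteratedDeriv 2 (jacobiP α β n) x := by
  have hS0 : Sfun α β n = fun y => (Spoly α β n).eval y := Sfun_eq_eval α β n
  have hS1 : deriv (Sfun α β n) = fun y => (derivative (Spoly α β n)).eval y := by
    funext y; rw [hS0]; exact Polynomial.deriv _
  have hS0x : Sfun α β n x = (Spoly α β n).eval x := by rw [hS0]
  have hS1x : deriv (Sfun α β n) x = (derivative (Spoly α β n)).eval x := by rw [hS1]
  have hS2x : iteratedDeriv 2 (Sfun α β n) x
      = (derivative (derivative (Spoly α β n))).eval x := by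
    rw [show (2:ℕ) = 1 + 1 from rfl, iteratedDeriv_succ, iteratedDeriv_one, hS1]
    exact Polynomial.deriv _
  have hP0 : jacobiP α β n = fun y => (Jpoly α β n).eval y := jacobiP_eq_eval α β n
  have hP1 : deriv (jacobiP α β n) = fun y => (derivative (Jpoly α β n)).eval y := by
    funext y; rw [hP0]; exact Polynomial.deriv _
  have hP2x : iteratedDeriv 2 (jacobiP α β n) x
      = (derivative (derivative (Jpoly α β n))).eval x := by
    rw [show (2:ℕ) = 1 + 1 from rfl, iteratedDeriv_succ, iteratedDeriv_one, hP1]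
    exact Polynomial.deriv _
  set lam : ℝ := (n : ℝ) * ((n : ℝ) + α + β + 1) with hlam
  set c0 : ℝ := 1 / ((α + 1) * (β + 1)) *
      (poch (α + β + 2) n * poch (α + β + 2) (n - 1) /
        (Nat.factorial n * Nat.factorial (n - 1))) with hc0
  have hODE := jacobi_ODE α β n
  have hODE' := congrArg derivative hODE
  set e0 : ℝ := (Jpoly α β n).eval x with he0
  set e1 : ℝ := (derivative (Jpoly α β n)).eval x with he1
  set e2 : ℝ := (derivative (derivative (Jpoly α β n))).eval x with he2
  set e3 : ℝ := (derivative (derivative (derivative (Jpoly α β n)))).eval x with he3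
  have ode1 : (1 - x^2) * e2 + (β - α - (α+β+2) * x) * e1 + lam * e0 = 0 := by
    have := congrArg (Polynomial.eval x) hODE
    simpa [eval_mul, eval_add, eval_sub, eval_pow, eval_C, eval_X, eval_one,
      ← he0, ← he1, ← he2] using this
  have ode2 : (-(2*x)) * e2 + (1 - x^2) * e3 +
      ((-(α+β+2)) * e1 + (β - α - (α+β+2) * x) * e2) + lam * e1 = 0 := by
    have := congrArg (Polynomial.eval x) hODE'
    simp only [derivative_add, derivative_mul, derivative_sub, derivative_one,
      derivative_pow, derivative_C, derivative_X, map_zero] at this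
    simpa [eval_mul, eval_add, eval_sub, eval_pow, eval_C, eval_X, eval_one,
      ← he1, ← he2, ← he3] using this
  have hse0 : (Spoly α β n).eval x
      = c0 * (lam * e0 - ((β+1)*(x-1) + (α+1)*(x+1)) * e1) := by
    simp only [Spoly, eval_mul, eval_add, eval_sub, eval_C, eval_X, eval_one,
      ← hc0, ← hlam, ← he0, ← he1]
  have hse1 : (derivative (Spoly α β n)).eval x
      = c0 * (lam * e1 - (α+β+2) * e1 - ((β+1)*(x-1) + (α+1)*(x+1)) * e2) := by
    simp only [Spoly, derivative_mul, derivative_sub, derivative_add, derivative_C,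
      derivative_X, derivative_one, map_zero]
    simp only [eval_mul, eval_add, eval_sub, eval_C, eval_X, eval_one, eval_zero,
      ← hc0, ← hlam, ← he0, ← he1, ← he2]
    ring
  have hse2 : (derivative (derivative (Spoly α β n))).eval x
      = c0 * (lam * e2 - 2*(α+β+2) * e2 - ((β+1)*(x-1) + (α+1)*(x+1)) * e3) := by
    simp only [Spoly, derivative_mul, derivative_sub, derivative_add, derivative_C,
      derivative_X, derivative_one, map_zero]
    simp only [eval_mul, eval_add, eval_sub, eval_C, eval_X, eval_one, eval_zero,
      ← hc0, ← hlam, ← he0, ← he1, ← he2, ← he3]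
    ring
  rw [hS2x, hse2, hS1x, hse1, hS0x, hse0, hP2x]
  have hconst : 2 / ((α + 1) * (β + 1)) * (poch (α + β + 2) n / Nat.factorial n) *
      (poch (α + β + 2) (n - 1) / Nat.factorial (n - 1)) = 2 * c0 := by
    rw [hc0]; ring
  rw [hconst]
  linear_combination (c0 * lam) * ode1 - (c0 * ((α+β+2)*x + (α-β))) * ode2
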